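/- With the same setup (mₙ₊₁ = mₙ·[[1,1/εₙ],[1/εₙ,0]]·mₙ, lₙ = (mₙ[0,1]+mₙ[1,0])/εₙ + mₙ[0,0], L₀=1, Lₙ₊₁=Lₙ·lₙ, (εₙ) periodic of period n), for all j ≥ 0 one has l_{n+j} = Lₙ^{2^j}·l_j. -/
import Mathlib


/-- Setup of Section 2 of the paper: over a field `K` of characteristic 2
(e.g. `F₂((1/a₀,…,1/a_k))`), `m₀` is the product (in reverse order) of the
matrices `[[1,1/w],[1/w,0]]` over the letters `w` of a finite word `W₀`,
`(εₙ)` is a periodic sequence of period `n` of nonzero elements (the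
variables), `mₙ₊₁ = mₙ·[[1,1/εₙ],[1/εₙ,0]]·mₙ`,
`lₙ = (mₙ[0,1]+mₙ[1,0])/εₙ + mₙ[0,0]`, `L₀ = 1`, `Lₙ₊₁ = Lₙ·lₙ`.
Then `l_{n+j} = Lₙ^{2^j}·l_j` for all `j ≥ 0`. -/
theorem l_periodic_power {K : Type*} [Field K] [CharP K 2]
    (W₀ : List K) (hW₀ : ∀ w ∈ W₀, w ≠ 0)
    (eps : ℕ → K) (heps : ∀ i, eps i ≠ 0)
    (n : ℕ) (hn : 0 < n) (hper : ∀ i, eps (i + n) = eps i)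
    (m : ℕ → Matrix (Fin 2) (Fin 2) K)
    (hm0 : m 0 = (W₀.reverse.map fun w => !![1, w⁻¹; w⁻¹, 0]).prod)
    (hm : ∀ i, m (i + 1) = m i * !![1, (eps i)⁻¹; (eps i)⁻¹, 0] * m i)
    (l : ℕ → K) (hl : ∀ i, l i = (m i 0 1 + m i 1 0) / eps i + m i 0 0)
    (L : ℕ → K) (hL0 : L 0 = 1) (hLs : ∀ i, L (i + 1) = L i * l i) :
    ∀ j, l (n + j) = L n ^ 2 ^ j * l j := by
  -- Key identity: m_{i+1} = l_i • m_i + !![0, q; q, r] where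
  -- q = det(m_i)/eps_i and r = -det(m_i).
  have key : ∀ i, m (i + 1) = l i • m i +
      !![0, (m i 0 0 * m i 1 1 - m i 0 1 * m i 1 0) / eps i;
         (m i 0 0 * m i 1 1 - m i 0 1 * m i 1 0) / eps i,
         m i 0 1 * m i 1 0 - m i 0 0 * m i 1 1] := by
    intro i
    rw [hm i, hl i]
    ext a b
    fin_cases a <;> fin_cases b <;>
      · simp [Matrix.mul_apply, Fin.sum_univ_two]
        field_simp
        ring
  -- Base: for all i, m i = L i • m 0 + a symmetric matrix with zero (0,0) entry.
  have base : ∀ i, ∃ q r : K, m i = L i • m 0 + !![0, q; q, r] := by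
    intro i
    induction i with
    | zero =>
      refine ⟨0, 0, ?_⟩
      rw [hL0, one_smul]
      ext a b
      fin_cases a <;> fin_cases b <;> simp
    | succ i ih =>
      obtain ⟨q, r, hq⟩ := ih
      refine ⟨l i * q + (m i 0 0 * m i 1 1 - m i 0 1 * m i 1 0) / eps i,
        l i * r + (m i 0 1 * m i 1 0 - m i 0 0 * m i 1 1), ?_⟩
      rw [key i, hLs i]
      nth_rewrite 1 [hq]
      ext a b
      fin_cases a <;> fin_cases b <;>
        · simp [Matrix.add_apply, Matrix.smul_apply]
          ring
  -- From a symmetric perturbation, l transfers (this is where char 2 is used).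
  have lcomp : ∀ j (c q r : K), m (n + j) = c • m j + !![0, q; q, r] →
      l (n + j) = c * l j := by
    intro j c q r hmj
    rw [hl (n + j), hl j, hmj]
    have he : eps (n + j) = eps j := by rw [add_comm]; exact hper j
    have h2 : q + q = 0 := CharTwo.add_self_eq_zero q
    simp only [Matrix.add_apply, Matrix.smul_apply, smul_eq_mul, he]
    norm_num
    linear_combination h2 / eps j
  -- Main claim by induction on j.
  have main : ∀ j, ∃ q r : K, m (n + j) = (L n ^ 2 ^ j) • m j + !![0, q; q, r] := by
    intro j
    induction j with
    | zero =>
      obtain ⟨q, r, hq⟩ := base n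
      exact ⟨q, r, by rw [pow_zero, pow_one]; simpa using hq⟩
    | succ j ih =>
      obtain ⟨q, r, hq⟩ := ih
      have hls : l (n + j) = L n ^ 2 ^ j * l j := lcomp j _ q r hq
      have hpow : L n ^ 2 ^ (j + 1) = (L n ^ 2 ^ j) ^ 2 := by
        rw [pow_succ, pow_mul]
      refine ⟨L n ^ 2 ^ j * l j * q +
          (m (n + j) 0 0 * m (n + j) 1 1 - m (n + j) 0 1 * m (n + j) 1 0) / eps (n + j)
          - (L n ^ 2 ^ j) ^ 2 *
            ((m j 0 0 * m j 1 1 - m j 0 1 * m j 1 0) / eps j),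
        L n ^ 2 ^ j * l j * r +
          (m (n + j) 0 1 * m (n + j) 1 0 - m (n + j) 0 0 * m (n + j) 1 1)
          - (L n ^ 2 ^ j) ^ 2 * (m j 0 1 * m j 1 0 - m j 0 0 * m j 1 1), ?_⟩
      have h1 : n + (j + 1) = (n + j) + 1 := by ring
      rw [h1, key (n + j), hls, hpow, key j]
      nth_rewrite 1 [hq]
      ext a b
      fin_cases a <;> fin_cases b <;>
        · simp [Matrix.add_apply, Matrix.smul_apply]
          ring
  intro j
  obtain ⟨q, r, hq⟩ := main j
  exact lcomp j _ q r hq
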